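/- Let V = V_1 ⊕ V_2 and K ⊆ V_1 ⊗ V_2 ⊆ ⋀²V. The bigraded Koszul module W(V,K), defined as the middle homology of K ⊗ S → V ⊗ S → S, is generated as an S-module in bidegree (0,0). Consequently, if W_{d_0,e_0}(V,K) = 0 for some (d_0,e_0), then W_{d,e}(V,K) = 0 for all d ≥ d_0 and e ≥ e_0. -/
import Mathlib


open MvPolynomial

/-- The bigrading weight on the variables of `S = Sym(V₁ ⊕ V₂)`, realized as the polynomial
ring in `n₁ + n₂` variables: variables from `V₁` have bidegree `(1,0)`, those from `V₂` have
bidegree `(0,1)`. -/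
def biWeight (n₁ n₂ : ℕ) : (Fin n₁ ⊕ Fin n₂) → ℕ × ℕ :=
  Sum.elim (fun _ => (1, 0)) (fun _ => (0, 1))

/-- `W_{d,e}(V,K) = 0`, i.e. exactness in the middle of
`K ⊗ S_{d,e} → V₁ ⊗ S_{d,e+1} ⊕ V₂ ⊗ S_{d+1,e} → S_{d+1,e+1}`.
An element of the middle term is a tuple `v` of polynomials (the coefficients of the basis of
`V = V₁ ⊕ V₂`) of the indicated bidegrees; it is a cycle when `∑ xᵢ · v i = 0`, and a boundary
when it is a sum of Koszul boundaries `δ₂(κ ⊗ s)` with `κ ∈ K ⊆ V₁ ⊗ V₂ = S_{(1,1)}` and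
`s ∈ S_{d,e}`; in coordinates `δ₂(κ ⊗ s)` has `V₁`-components `(∂κ/∂xᵢ)·s` and
`V₂`-components `-(∂κ/∂yⱼ)·s`. -/
def KoszulVanish (k : Type) [Field k] (n₁ n₂ : ℕ)
    (K : Submodule k (MvPolynomial (Fin n₁ ⊕ Fin n₂) k)) (d e : ℕ) : Prop :=
  ∀ v : (Fin n₁ ⊕ Fin n₂) → MvPolynomial (Fin n₁ ⊕ Fin n₂) k,
    (∀ i : Fin n₁, v (Sum.inl i) ∈
      weightedHomogeneousSubmodule k (biWeight n₁ n₂) (d, e + 1)) →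
    (∀ j : Fin n₂, v (Sum.inr j) ∈
      weightedHomogeneousSubmodule k (biWeight n₁ n₂) (d + 1, e)) →
    (∑ i : Fin n₁ ⊕ Fin n₂, X i * v i) = 0 →
    ∃ (m : ℕ) (κ : Fin m → MvPolynomial (Fin n₁ ⊕ Fin n₂) k)
      (s : Fin m → MvPolynomial (Fin n₁ ⊕ Fin n₂) k),
      (∀ t, κ t ∈ K) ∧
      (∀ t, s t ∈ weightedHomogeneousSubmodule k (biWeight n₁ n₂) (d, e)) ∧
      (∀ i : Fin n₁, v (Sum.inl i) = ∑ t, pderiv (Sum.inl i) (κ t) * s t) ∧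
      (∀ j : Fin n₂, v (Sum.inr j) = -∑ t, pderiv (Sum.inr j) (κ t) * s t)

private lemma X_mul_eq_zero {R : Type*} [CommRing R] {p : Polynomial R}
    (h : Polynomial.X * p = 0) : p = 0 := by
  ext n
  have := congrArg (fun q => Polynomial.coeff q (n+1)) h
  simpa [Polynomial.coeff_X_mul] using this

set_option maxHeartbeats 1000000 in
private lemma koszul_syzygy_fin {k : Type*} [CommRing k] :
    ∀ (n : ℕ) (v : Fin n → MvPolynomial (Fin n) k),
      (∑ i, X i * v i) = 0 →
      ∃ c : Fin n → Fin n → MvPolynomial (Fin n) k,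
        (∀ i j, c j i = - c i j) ∧ (∀ i, c i i = 0) ∧ (∀ i, v i = ∑ j, X j * c i j) := by
  intro n
  induction n with
  | zero =>
    intro v _
    exact ⟨fun i _ => 0, fun i => i.elim0, fun i => i.elim0, fun i => i.elim0⟩
  | succ n ih =>
    intro v hv
    set E := MvPolynomial.finSuccEquiv k n with hE
    set P : Fin (n+1) → Polynomial (MvPolynomial (Fin n) k) := fun i => E (v i) with hP
    have heq : Polynomial.X * P 0 + ∑ i : Fin n, Polynomial.C (X i) * P i.succ = 0 := by
      have := congrArg E hv
      rw [map_sum, map_zero] at this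
      rw [← this, Fin.sum_univ_succ]
      simp only [hP, hE, map_mul, finSuccEquiv_X_zero, finSuccEquiv_X_succ]
    set a : Fin n → MvPolynomial (Fin n) k := fun i => (P i.succ).coeff 0 with ha
    set Q : Fin n → Polynomial (MvPolynomial (Fin n) k) := fun i => (P i.succ).divX with hQ
    have hPs : ∀ i : Fin n, P i.succ = Polynomial.X * Q i + Polynomial.C (a i) := fun i =>
      (Polynomial.X_mul_divX_add (P i.succ)).symm
    have hconst : (∑ i : Fin n, X i * a i) = 0 := by
      have := congrArg (fun q => Polynomial.coeff q 0) heq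
      simpa [Polynomial.mul_coeff_zero, Polynomial.coeff_C_mul, ha] using this
    obtain ⟨c, hanti, hdiag, hdec⟩ := ih a hconst
    have hP0 : P 0 = - ∑ i : Fin n, Polynomial.C (X i) * Q i := by
      have h2 : Polynomial.X * (P 0 + ∑ i : Fin n, Polynomial.C (X i) * Q i) = 0 := by
        have : Polynomial.X * P 0 + ∑ i : Fin n, Polynomial.C (X i) * P i.succ
            = Polynomial.X * (P 0 + ∑ i : Fin n, Polynomial.C (X i) * Q i)
              + Polynomial.C (∑ i : Fin n, X i * a i) := by
          rw [mul_add, map_sum]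
          rw [Finset.mul_sum]
          rw [add_assoc, ← Finset.sum_add_distrib]
          congr 1
          refine Finset.sum_congr rfl fun i _ => ?_
          rw [hPs i, Polynomial.C_mul]
          ring
        rw [this, hconst, map_zero, add_zero] at heq
        exact heq
      have := X_mul_eq_zero h2
      linear_combination (norm := ring_nf) this
    -- the big c'
    set d : Fin (n+1) → Fin (n+1) → Polynomial (MvPolynomial (Fin n) k) :=
      Fin.cons (Fin.cons 0 (fun j' => - Q j'))
        (fun i' => Fin.cons (Q i') (fun j' => Polynomial.C (c i' j'))) with hd
    have hd0 : d 0 0 = 0 := by rw [hd]; rw [Fin.cons_zero, Fin.cons_zero]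
    have hd1 : ∀ j' : Fin n, d 0 j'.succ = - Q j' := fun j' => by
      rw [hd, Fin.cons_zero, Fin.cons_succ]
    have hd2 : ∀ i' : Fin n, d i'.succ 0 = Q i' := fun i' => by
      rw [hd, Fin.cons_succ, Fin.cons_zero]
    have hd3 : ∀ i' j' : Fin n, d i'.succ j'.succ = Polynomial.C (c i' j') := fun i' j' => by
      rw [hd, Fin.cons_succ, Fin.cons_succ]
    refine ⟨fun i j => E.symm (d i j), ?_, ?_, ?_⟩
    · intro i j
      show E.symm (d j i) = - E.symm (d i j)
      induction i using Fin.cases with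
      | zero =>
        induction j using Fin.cases with
        | zero => rw [hd0, map_zero, neg_zero]
        | succ j' => rw [hd2, hd1, map_neg, neg_neg]
      | succ i' =>
        induction j using Fin.cases with
        | zero => rw [hd1, hd2, map_neg]
        | succ j' => rw [hd3, hd3, hanti i' j', map_neg, map_neg]
    · intro i
      show E.symm (d i i) = 0
      induction i using Fin.cases with
      | zero => rw [hd0, map_zero]
      | succ i' => rw [hd3, hdiag i', map_zero, map_zero]
    · intro i
      apply E.injective
      rw [map_sum]
      have hterm : ∀ j : Fin (n+1), E (X j * E.symm (d i j)) = E (X j) * d i j := by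
        intro j; rw [map_mul, AlgEquiv.apply_symm_apply]
      simp_rw [hterm]
      rw [Fin.sum_univ_succ]
      have hx0 : E (X (0 : Fin (n+1))) = Polynomial.X := finSuccEquiv_X_zero
      have hxs : ∀ j : Fin n, E (X j.succ) = Polynomial.C (X j) := fun j => finSuccEquiv_X_succ
      rw [hx0]
      simp_rw [hxs]
      induction i using Fin.cases with
      | zero =>
        show P 0 = _
        rw [hP0, hd0, mul_zero, zero_add, ← Finset.sum_neg_distrib]
        refine Finset.sum_congr rfl fun j _ => by rw [hd1]; ring
      | succ i' =>
        show P i'.succ = _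
        rw [hPs i', hd2]
        have : Polynomial.C (a i') = ∑ j : Fin n, Polynomial.C (X j) * d i'.succ j.succ := by
          rw [hdec i', map_sum]
          refine Finset.sum_congr rfl fun j _ => by rw [hd3, Polynomial.C_mul]
        rw [this]

private lemma koszul_syzygy {k : Type} [CommRing k] {n₁ n₂ : ℕ}
    (v : (Fin n₁ ⊕ Fin n₂) → MvPolynomial (Fin n₁ ⊕ Fin n₂) k)
    (hv : (∑ i, X i * v i) = 0) :
    ∃ c : (Fin n₁ ⊕ Fin n₂) → (Fin n₁ ⊕ Fin n₂) → MvPolynomial (Fin n₁ ⊕ Fin n₂) k,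
      (∀ i j, c j i = - c i j) ∧ (∀ i, c i i = 0) ∧ (∀ i, v i = ∑ j, X j * c i j) := by
  classical
  set e := finSumFinEquiv (m := n₁) (n := n₂) with he
  set E := renameEquiv k e with hE
  set v' : Fin (n₁ + n₂) → MvPolynomial (Fin (n₁ + n₂)) k :=
    fun j => E (v (e.symm j)) with hv'
  have hXE : ∀ i : Fin n₁ ⊕ Fin n₂, E (X i) = X (e i) := fun i => rename_X e i
  have hsum : (∑ j, X j * v' j) = 0 := by
    have : (∑ j : Fin (n₁ + n₂), X j * v' j)
        = E (∑ j : Fin (n₁ + n₂), X (e.symm j) * v (e.symm j)) := by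
      rw [map_sum]
      refine Finset.sum_congr rfl fun j _ => ?_
      rw [map_mul, hXE, Equiv.apply_symm_apply]
    rw [this]
    rw [Equiv.sum_comp e.symm fun i => X i * v i, hv, map_zero]
  obtain ⟨c₀, hanti, hdiag, hdec⟩ := koszul_syzygy_fin (n₁ + n₂) v' hsum
  refine ⟨fun i j => E.symm (c₀ (e i) (e j)), ?_, ?_, ?_⟩
  · intro i j
    show E.symm (c₀ (e j) (e i)) = - E.symm (c₀ (e i) (e j))
    rw [hanti, map_neg]
  · intro i
    show E.symm (c₀ (e i) (e i)) = 0
    rw [hdiag, map_zero]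
  · intro i
    have h1 : v i = E.symm (v' (e i)) := by
      show v i = E.symm (E (v (e.symm (e i))))
      rw [Equiv.symm_apply_apply, AlgEquiv.symm_apply_apply]
    rw [h1, hdec (e i), map_sum,
      ← Equiv.sum_comp e (fun j => E.symm (X j * c₀ (e i) j))]
    refine Finset.sum_congr rfl fun j _ => ?_
    show E.symm (X (e j) * c₀ (e i) (e j)) = X j * E.symm (c₀ (e i) (e j))
    rw [map_mul]
    congr 1
    rw [← hXE j, AlgEquiv.symm_apply_apply]

private lemma weight_single_one {σ : Type*} {M : Type*} [AddCommMonoid M]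
    (w : σ → M) (i : σ) : Finsupp.weight w (Finsupp.single i 1) = w i := by
  rw [Finsupp.weight_apply, Finsupp.sum_single_index (by simp), one_smul]

private lemma weight_sub_single {σ : Type*} {M : Type*} [AddCancelCommMonoid M]
    {w : σ → M} {μ : σ →₀ ℕ} {i : σ} (h : μ i ≠ 0) :
    Finsupp.weight w μ = Finsupp.weight w (μ - Finsupp.single i 1) + w i := by
  conv_lhs => rw [← tsub_add_cancel_of_le
    (Finsupp.single_le_iff.mpr (Nat.one_le_iff_ne_zero.mpr h))]
  rw [map_add, weight_single_one]

private lemma whc_X_mul {σ : Type*} {M : Type*} [AddCancelCommMonoid M]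
    {k : Type} [CommRing k] (w : σ → M) (i : σ) (m : M) (p : MvPolynomial σ k) :
    weightedHomogeneousComponent w (m + w i) (X i * p)
      = X i * weightedHomogeneousComponent w m p := by
  classical
  ext μ
  rw [coeff_weightedHomogeneousComponent, coeff_X_mul', coeff_X_mul',
    coeff_weightedHomogeneousComponent]
  by_cases h : i ∈ μ.support
  · rw [if_pos h, if_pos h]
    have hw := weight_sub_single (w := w) (Finsupp.mem_support_iff.mp h)
    refine if_congr ?_ rfl rfl
    constructor
    · intro hc; rw [hw] at hc; exact add_right_cancel hc
    · intro hc; rw [hw, hc]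
  · rw [if_neg h, if_neg h, ite_self]

private lemma whc_X_mul_eq_zero {σ : Type*} {M : Type*} [AddCancelCommMonoid M]
    {k : Type} [CommRing k] (w : σ → M) (i : σ) (n : M) (p : MvPolynomial σ k)
    (h : ∀ m : M, n ≠ m + w i) :
    weightedHomogeneousComponent w n (X i * p) = 0 := by
  classical
  ext μ
  rw [coeff_weightedHomogeneousComponent, coeff_X_mul', coeff_zero]
  by_cases hs : i ∈ μ.support
  · rw [if_pos hs]
    refine if_neg fun hc => ?_
    exact h _ (by rw [← hc, weight_sub_single (Finsupp.mem_support_iff.mp hs)])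
  · rw [if_neg hs, ite_self]

private lemma biWeight_fst_pos {n₁ n₂ : ℕ} {μ : (Fin n₁ ⊕ Fin n₂) →₀ ℕ} {a b : ℕ}
    (h : Finsupp.weight (biWeight n₁ n₂) μ = (a + 1, b)) :
    ∃ c : Fin n₁, μ (Sum.inl c) ≠ 0 := by
  by_contra hc
  push_neg at hc
  have h1 : (Finsupp.weight (biWeight n₁ n₂) μ).1 = 0 := by
    rw [Finsupp.weight_apply, Finsupp.sum]
    show (AddMonoidHom.fst ℕ ℕ) (∑ a ∈ μ.support, μ a • biWeight n₁ n₂ a) = 0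
    rw [map_sum]
    refine Finset.sum_eq_zero fun i hi => ?_
    match i with
    | Sum.inl c => simp [hc c] at hi
    | Sum.inr c => simp [biWeight]
  rw [h] at h1
  simp at h1

private lemma biWeight_snd_pos {n₁ n₂ : ℕ} {μ : (Fin n₁ ⊕ Fin n₂) →₀ ℕ} {a b : ℕ}
    (h : Finsupp.weight (biWeight n₁ n₂) μ = (a, b + 1)) :
    ∃ c : Fin n₂, μ (Sum.inr c) ≠ 0 := by
  by_contra hc
  push_neg at hc
  have h1 : (Finsupp.weight (biWeight n₁ n₂) μ).2 = 0 := by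
    rw [Finsupp.weight_apply, Finsupp.sum]
    show (AddMonoidHom.snd ℕ ℕ) (∑ a ∈ μ.support, μ a • biWeight n₁ n₂ a) = 0
    rw [map_sum]
    refine Finset.sum_eq_zero fun i hi => ?_
    match i with
    | Sum.inr c => simp [hc c] at hi
    | Sum.inl c => simp [biWeight]
  rw [h] at h1
  simp at h1

private lemma exists_factor_left {k : Type} [CommRing k] {n₁ n₂ : ℕ} (hn : 0 < n₁)
    {p : MvPolynomial (Fin n₁ ⊕ Fin n₂) k} {a b : ℕ}
    (hp : p.IsWeightedHomogeneous (biWeight n₁ n₂) (a + 1, b)) :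
    ∃ r : Fin n₁ → MvPolynomial (Fin n₁ ⊕ Fin n₂) k,
      (∀ c, (r c).IsWeightedHomogeneous (biWeight n₁ n₂) (a, b)) ∧
      (p = ∑ c, X (Sum.inl c) * r c) ∧ (p = 0 → ∀ c, r c = 0) := by
  classical
  set pick : ((Fin n₁ ⊕ Fin n₂) →₀ ℕ) → Fin n₁ := fun μ =>
    if h : ∃ c, μ (Sum.inl c) ≠ 0 then h.choose else ⟨0, hn⟩ with hpickdef
  have hw : ∀ μ ∈ p.support, Finsupp.weight (biWeight n₁ n₂) μ = (a + 1, b) :=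
    fun μ hμ => hp (mem_support_iff.mp hμ)
  have hpick : ∀ μ ∈ p.support, μ (Sum.inl (pick μ)) ≠ 0 := by
    intro μ hμ
    have hex : ∃ c, μ (Sum.inl c) ≠ 0 := biWeight_fst_pos (hw μ hμ)
    rw [hpickdef]
    simp only [dif_pos hex]
    exact hex.choose_spec
  set r : Fin n₁ → MvPolynomial (Fin n₁ ⊕ Fin n₂) k := fun c =>
    ∑ μ ∈ p.support.filter (fun μ => pick μ = c),
      monomial (μ - Finsupp.single (Sum.inl c) 1) (coeff μ p) with hrdef
  have hsub : ∀ (c : Fin n₁) (μ), μ ∈ p.support → pick μ = c →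
      Finsupp.single (Sum.inl c : Fin n₁ ⊕ Fin n₂) 1 ≤ μ := by
    intro c μ hμ hc
    exact Finsupp.single_le_iff.mpr (Nat.one_le_iff_ne_zero.mpr (hc ▸ hpick μ hμ))
  refine ⟨r, ?_, ?_, ?_⟩
  · intro c
    refine IsWeightedHomogeneous.sum _ _ _ fun μ hμ => ?_
    obtain ⟨hμs, hμc⟩ := Finset.mem_filter.mp hμ
    refine isWeightedHomogeneous_monomial _ _ _ ?_
    have h1 : Finsupp.weight (biWeight n₁ n₂) μ =
        Finsupp.weight (biWeight n₁ n₂) (μ - Finsupp.single (Sum.inl c) 1)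
          + biWeight n₁ n₂ (Sum.inl c) := by
      exact weight_sub_single (hμc ▸ hpick μ hμs)
    rw [hw μ hμs] at h1
    have h2 : biWeight n₁ n₂ (Sum.inl c) = ((1 : ℕ), (0 : ℕ)) := rfl
    rw [h2] at h1
    have h3 := congrArg Prod.fst h1
    have h4 := congrArg Prod.snd h1
    simp only [Prod.fst_add, Prod.snd_add] at h3 h4
    refine Prod.ext ?_ ?_ <;> simp at h3 h4 ⊢ <;> omega
  · have key : ∀ c, X (Sum.inl c) * r c
        = ∑ μ ∈ p.support.filter (fun μ => pick μ = c), monomial μ (coeff μ p) := by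
      intro c
      rw [hrdef, Finset.mul_sum]
      refine Finset.sum_congr rfl fun μ hμ => ?_
      obtain ⟨hμs, hμc⟩ := Finset.mem_filter.mp hμ
      rw [show (X (Sum.inl c) : MvPolynomial (Fin n₁ ⊕ Fin n₂) k)
          = monomial (Finsupp.single (Sum.inl c) 1) 1 from rfl, monomial_mul, one_mul,
        add_tsub_cancel_of_le (hsub c μ hμs hμc)]
    calc p = ∑ μ ∈ p.support, monomial μ (coeff μ p) := (support_sum_monomial_coeff p).symm
      _ = ∑ c, ∑ μ ∈ p.support.filter (fun μ => pick μ = c), monomial μ (coeff μ p) :=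
          (Finset.sum_fiberwise p.support pick (fun μ => monomial μ (coeff μ p))).symm
      _ = ∑ c, X (Sum.inl c) * r c := Finset.sum_congr rfl fun c _ => (key c).symm
  · intro hp0 c
    rw [hrdef]
    simp [hp0]

private lemma exists_factor_right {k : Type} [CommRing k] {n₁ n₂ : ℕ} (hn : 0 < n₂)
    {p : MvPolynomial (Fin n₁ ⊕ Fin n₂) k} {a b : ℕ}
    (hp : p.IsWeightedHomogeneous (biWeight n₁ n₂) (a, b + 1)) :
    ∃ r : Fin n₂ → MvPolynomial (Fin n₁ ⊕ Fin n₂) k,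
      (∀ c, (r c).IsWeightedHomogeneous (biWeight n₁ n₂) (a, b)) ∧
      (p = ∑ c, X (Sum.inr c) * r c) ∧ (p = 0 → ∀ c, r c = 0) := by
  classical
  set pick : ((Fin n₁ ⊕ Fin n₂) →₀ ℕ) → Fin n₂ := fun μ =>
    if h : ∃ c, μ (Sum.inr c) ≠ 0 then h.choose else ⟨0, hn⟩ with hpickdef
  have hw : ∀ μ ∈ p.support, Finsupp.weight (biWeight n₁ n₂) μ = (a, b + 1) :=
    fun μ hμ => hp (mem_support_iff.mp hμ)
  have hpick : ∀ μ ∈ p.support, μ (Sum.inr (pick μ)) ≠ 0 := by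
    intro μ hμ
    have hex : ∃ c, μ (Sum.inr c) ≠ 0 := biWeight_snd_pos (hw μ hμ)
    rw [hpickdef]
    simp only [dif_pos hex]
    exact hex.choose_spec
  set r : Fin n₂ → MvPolynomial (Fin n₁ ⊕ Fin n₂) k := fun c =>
    ∑ μ ∈ p.support.filter (fun μ => pick μ = c),
      monomial (μ - Finsupp.single (Sum.inr c) 1) (coeff μ p) with hrdef
  have hsub : ∀ (c : Fin n₂) (μ), μ ∈ p.support → pick μ = c →
      Finsupp.single (Sum.inr c : Fin n₁ ⊕ Fin n₂) 1 ≤ μ := by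
    intro c μ hμ hc
    exact Finsupp.single_le_iff.mpr (Nat.one_le_iff_ne_zero.mpr (hc ▸ hpick μ hμ))
  refine ⟨r, ?_, ?_, ?_⟩
  · intro c
    refine IsWeightedHomogeneous.sum _ _ _ fun μ hμ => ?_
    obtain ⟨hμs, hμc⟩ := Finset.mem_filter.mp hμ
    refine isWeightedHomogeneous_monomial _ _ _ ?_
    have h1 : Finsupp.weight (biWeight n₁ n₂) μ =
        Finsupp.weight (biWeight n₁ n₂) (μ - Finsupp.single (Sum.inr c) 1)
          + biWeight n₁ n₂ (Sum.inr c) := by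
      exact weight_sub_single (hμc ▸ hpick μ hμs)
    rw [hw μ hμs] at h1
    have h2 : biWeight n₁ n₂ (Sum.inr c) = ((0 : ℕ), (1 : ℕ)) := rfl
    rw [h2] at h1
    have h3 := congrArg Prod.fst h1
    have h4 := congrArg Prod.snd h1
    simp only [Prod.fst_add, Prod.snd_add] at h3 h4
    refine Prod.ext ?_ ?_ <;> simp at h3 h4 ⊢ <;> omega
  · have key : ∀ c, X (Sum.inr c) * r c
        = ∑ μ ∈ p.support.filter (fun μ => pick μ = c), monomial μ (coeff μ p) := by
      intro c
      rw [hrdef, Finset.mul_sum]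
      refine Finset.sum_congr rfl fun μ hμ => ?_
      obtain ⟨hμs, hμc⟩ := Finset.mem_filter.mp hμ
      rw [show (X (Sum.inr c) : MvPolynomial (Fin n₁ ⊕ Fin n₂) k)
          = monomial (Finsupp.single (Sum.inr c) 1) 1 from rfl, monomial_mul, one_mul,
        add_tsub_cancel_of_le (hsub c μ hμs hμc)]
    calc p = ∑ μ ∈ p.support, monomial μ (coeff μ p) := (support_sum_monomial_coeff p).symm
      _ = ∑ c, ∑ μ ∈ p.support.filter (fun μ => pick μ = c), monomial μ (coeff μ p) :=
          (Finset.sum_fiberwise p.support pick (fun μ => monomial μ (coeff μ p))).symm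
      _ = ∑ c, X (Sum.inr c) * r c := Finset.sum_congr rfl fun c _ => (key c).symm
  · intro hp0 c
    rw [hrdef]
    simp [hp0]

private lemma stepD {k : Type} [CommRing k] {n₁ n₂ : ℕ} (h₁ : 0 < n₁) (h₂ : 0 < n₂)
    (d e : ℕ) (v : (Fin n₁ ⊕ Fin n₂) → MvPolynomial (Fin n₁ ⊕ Fin n₂) k)
    (hv1 : ∀ i, (v (Sum.inl i)).IsWeightedHomogeneous (biWeight n₁ n₂) (d + 1, e + 1))
    (hv2 : ∀ j, (v (Sum.inr j)).IsWeightedHomogeneous (biWeight n₁ n₂) (d + 2, e))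
    (hc : (∑ i, X i * v i) = 0) :
    ∃ wv : Fin n₁ → (Fin n₁ ⊕ Fin n₂) → MvPolynomial (Fin n₁ ⊕ Fin n₂) k,
      (∀ c i, (wv c (Sum.inl i)).IsWeightedHomogeneous (biWeight n₁ n₂) (d, e + 1)) ∧
      (∀ c j, (wv c (Sum.inr j)).IsWeightedHomogeneous (biWeight n₁ n₂) (d + 1, e)) ∧
      (∀ c, (∑ i, X i * wv c i) = 0) ∧
      (∀ i, v i = ∑ c, X (Sum.inl c) * wv c i) := by
  classical
  set w := biWeight n₁ n₂ with hwdef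
  obtain ⟨c, hanti, hdiag, hdec⟩ := koszul_syzygy v hc
  set A : Fin n₁ → Fin n₁ → MvPolynomial (Fin n₁ ⊕ Fin n₂) k := fun a b =>
    weightedHomogeneousComponent w (d, e + 1) (c (Sum.inl a) (Sum.inl b)) with hAdef
  set B : Fin n₁ → Fin n₂ → MvPolynomial (Fin n₁ ⊕ Fin n₂) k := fun a b =>
    weightedHomogeneousComponent w (d + 1, e) (c (Sum.inl a) (Sum.inr b)) with hBdef
  set B' : Fin n₂ → Fin n₁ → MvPolynomial (Fin n₁ ⊕ Fin n₂) k := fun a b =>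
    weightedHomogeneousComponent w (d + 1, e) (c (Sum.inr a) (Sum.inl b)) with hB'def
  set CC : Fin n₂ → Fin n₂ → MvPolynomial (Fin n₁ ⊕ Fin n₂) k := fun a b =>
    if e = 0 then 0 else
      weightedHomogeneousComponent w (d + 2, e - 1) (c (Sum.inr a) (Sum.inr b)) with hCdef
  -- basic properties
  have hA_anti : ∀ a b, A b a = - A a b := by
    intro a b; simp only [hAdef]; rw [hanti, map_neg]
  have hA_diag : ∀ a, A a a = 0 := by
    intro a; simp only [hAdef]; rw [hdiag, map_zero]
  have hB'_eq : ∀ a b, B' b a = - B a b := by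
    intro a b; simp only [hB'def, hBdef]; rw [hanti, map_neg]
  have hC_anti : ∀ a b, CC b a = - CC a b := by
    intro a b; simp only [hCdef]
    by_cases he : e = 0
    · simp [he]
    · simp only [if_neg he]
      rw [hanti, map_neg]
  have hC_diag : ∀ a, CC a a = 0 := by
    intro a; simp only [hCdef]
    by_cases he : e = 0
    · simp [he]
    · simp only [if_neg he]
      rw [hdiag, map_zero]
  have hA_h : ∀ a b, (A a b).IsWeightedHomogeneous w (d, e + 1) := fun a b =>
    weightedHomogeneousComponent_isWeightedHomogeneous _ _
  have hB_h : ∀ a b, (B a b).IsWeightedHomogeneous w (d + 1, e) := fun a b =>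
    weightedHomogeneousComponent_isWeightedHomogeneous _ _
  have hC_h : ∀ a b, (CC a b).IsWeightedHomogeneous w (d + 2, e - 1) := by
    intro a b; simp only [hCdef]
    by_cases he : e = 0
    · simp only [if_pos he]; exact isWeightedHomogeneous_zero _ _ _
    · simp only [if_neg he]
      exact weightedHomogeneousComponent_isWeightedHomogeneous _ _
  -- component extraction identities
  have hXA : ∀ (b : Fin n₁) (q : MvPolynomial (Fin n₁ ⊕ Fin n₂) k), weightedHomogeneousComponent w (d + 1, e + 1) (X (Sum.inl b) * q)
      = X (Sum.inl b) * weightedHomogeneousComponent w (d, e + 1) q := fun b q =>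
    whc_X_mul w (Sum.inl b) (d, e + 1) q
  have hXB : ∀ (b : Fin n₂) (q : MvPolynomial (Fin n₁ ⊕ Fin n₂) k), weightedHomogeneousComponent w (d + 1, e + 1) (X (Sum.inr b) * q)
      = X (Sum.inr b) * weightedHomogeneousComponent w (d + 1, e) q := fun b q =>
    whc_X_mul w (Sum.inr b) (d + 1, e) q
  have hXB' : ∀ (b : Fin n₁) (q : MvPolynomial (Fin n₁ ⊕ Fin n₂) k), weightedHomogeneousComponent w (d + 2, e) (X (Sum.inl b) * q)
      = X (Sum.inl b) * weightedHomogeneousComponent w (d + 1, e) q := fun b q =>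
    whc_X_mul w (Sum.inl b) (d + 1, e) q
  have hXC : ∀ (b : Fin n₂) (a : Fin n₂),
      weightedHomogeneousComponent w (d + 2, e) (X (Sum.inr b) * c (Sum.inr a) (Sum.inr b))
      = X (Sum.inr b) * CC a b := by
    intro b a
    simp only [hCdef]
    rcases e with _ | e'
    · rw [if_pos rfl, mul_zero]
      refine whc_X_mul_eq_zero w (Sum.inr b) _ _ fun m hm => ?_
      have := congrArg Prod.snd hm
      simp only [Prod.snd_add] at this
      have hwb : (w (Sum.inr b)).2 = 1 := rfl
      omega
    · rw [if_neg (Nat.succ_ne_zero e')]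
      exact whc_X_mul w (Sum.inr b) (d + 2, e') _
  -- decomposition of v in terms of components
  have hvA : ∀ p, v (Sum.inl p)
      = ∑ b, X (Sum.inl b) * A p b + ∑ b, X (Sum.inr b) * B p b := by
    intro p
    conv_lhs => rw [← (hv1 p).weightedHomogeneousComponent_same, hdec (Sum.inl p)]
    rw [map_sum, Fintype.sum_sum_type]
    congr 1
    · exact Finset.sum_congr rfl fun b _ => hXA b _
    · exact Finset.sum_congr rfl fun b _ => hXB b _
  have hvB : ∀ q, v (Sum.inr q)
      = ∑ b, X (Sum.inl b) * B' q b + ∑ b, X (Sum.inr b) * CC q b := by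
    intro q
    conv_lhs => rw [← (hv2 q).weightedHomogeneousComponent_same, hdec (Sum.inr q)]
    rw [map_sum, Fintype.sum_sum_type]
    congr 1
    · exact Finset.sum_congr rfl fun b _ => hXB' b _
    · exact Finset.sum_congr rfl fun b _ => hXC b q
  -- factor the components
  have hfac₁ : ∀ a b, ∃ r : Fin n₂ → MvPolynomial (Fin n₁ ⊕ Fin n₂) k,
      (∀ t, (r t).IsWeightedHomogeneous w (d, e)) ∧
      (A a b = ∑ t, X (Sum.inr t) * r t) ∧ (A a b = 0 → ∀ t, r t = 0) :=
    fun a b => exists_factor_right h₂ (hA_h a b)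
  choose s₁ hs₁h hs₁eq hs₁0 using hfac₁
  have hfac₂ : ∀ a b, ∃ r : Fin n₁ → MvPolynomial (Fin n₁ ⊕ Fin n₂) k,
      (∀ t, (r t).IsWeightedHomogeneous w (d, e)) ∧
      (B a b = ∑ t, X (Sum.inl t) * r t) ∧ (B a b = 0 → ∀ t, r t = 0) :=
    fun a b => exists_factor_left h₁ (hB_h a b)
  choose s₂ hs₂h hs₂eq hs₂0 using hfac₂
  have hfac₃ : ∀ a b, ∃ r : Fin n₁ → MvPolynomial (Fin n₁ ⊕ Fin n₂) k,
      (∀ t, (r t).IsWeightedHomogeneous w (d + 1, e - 1)) ∧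
      (CC a b = ∑ t, X (Sum.inl t) * r t) ∧ (CC a b = 0 → ∀ t, r t = 0) :=
    fun a b => exists_factor_left h₁ (hC_h a b)
  choose s₃ hs₃h hs₃eq hs₃0 using hfac₃
  -- triangular versions
  set t₁ : Fin n₁ → Fin n₁ → Fin n₂ → MvPolynomial (Fin n₁ ⊕ Fin n₂) k :=
    fun a b t => if a < b then s₁ a b t else 0 with ht₁def
  set t₃ : Fin n₂ → Fin n₂ → Fin n₁ → MvPolynomial (Fin n₁ ⊕ Fin n₂) k :=
    fun a b t => if a < b then s₃ a b t else 0 with ht₃def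
  have ht₁h : ∀ a b t, (t₁ a b t).IsWeightedHomogeneous w (d, e) := by
    intro a b t; simp only [ht₁def]
    split
    · exact hs₁h a b t
    · exact isWeightedHomogeneous_zero _ _ _
  have ht₃h : ∀ a b t, (t₃ a b t).IsWeightedHomogeneous w (d + 1, e - 1) := by
    intro a b t; simp only [ht₃def]
    split
    · exact hs₃h a b t
    · exact isWeightedHomogeneous_zero _ _ _
  have ht₃0 : e = 0 → ∀ a b t, t₃ a b t = 0 := by
    intro he a b t; simp only [ht₃def]
    split
    · exact hs₃0 a b (by simp only [hCdef]; rw [if_pos he]) t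
    · rfl
  have hA_eq : ∀ a b, A a b = ∑ t, X (Sum.inr t) * (t₁ a b t - t₁ b a t) := by
    intro a b
    rcases lt_trichotomy a b with hab | rfl | hab
    · rw [hs₁eq a b]
      refine Finset.sum_congr rfl fun t _ => ?_
      simp only [ht₁def]
      rw [if_pos hab, if_neg (by omega : ¬ b < a), sub_zero]
    · rw [hA_diag]
      symm
      refine Finset.sum_eq_zero fun t _ => ?_
      simp only [ht₁def]
      rw [sub_self, mul_zero]
    · rw [hA_anti b a, hs₁eq b a, ← Finset.sum_neg_distrib]
      refine Finset.sum_congr rfl fun t _ => ?_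
      simp only [ht₁def]
      rw [if_pos hab, if_neg (by omega : ¬ a < b), zero_sub, mul_neg]
  have hC_eq : ∀ a b, CC a b = ∑ t, X (Sum.inl t) * (t₃ a b t - t₃ b a t) := by
    intro a b
    rcases lt_trichotomy a b with hab | rfl | hab
    · rw [hs₃eq a b]
      refine Finset.sum_congr rfl fun t _ => ?_
      simp only [ht₃def]
      rw [if_pos hab, if_neg (by omega : ¬ b < a), sub_zero]
    · rw [hC_diag]
      symm
      refine Finset.sum_eq_zero fun t _ => ?_
      simp only [ht₃def]
      rw [sub_self, mul_zero]
    · rw [hC_anti b a, hs₃eq b a, ← Finset.sum_neg_distrib]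
      refine Finset.sum_congr rfl fun t _ => ?_
      simp only [ht₃def]
      rw [if_pos hab, if_neg (by omega : ¬ a < b), zero_sub, mul_neg]
  -- degree bookkeeping
  have hdegL : ∀ (b : Fin n₁), w (Sum.inl b) + ((d : ℕ), e) = (d + 1, e) := by
    intro b
    show ((1 : ℕ), (0 : ℕ)) + ((d : ℕ), e) = (d + 1, e)
    rw [Prod.mk_add_mk]
    exact Prod.ext (by omega) (by omega)
  have hdegR : ∀ (b : Fin n₂), w (Sum.inr b) + ((d : ℕ), e) = (d, e + 1) := by
    intro b
    show ((0 : ℕ), (1 : ℕ)) + ((d : ℕ), e) = (d, e + 1)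
    rw [Prod.mk_add_mk]
    exact Prod.ext (by omega) (by omega)
  -- the generators
  refine ⟨fun cc => Sum.elim
    (fun p => A p cc + ∑ b, X (Sum.inr b) * s₂ p b cc)
    (fun q => - (∑ a, X (Sum.inl a) * (t₁ a cc q - t₁ cc a q))
        - (∑ a, X (Sum.inl a) * s₂ a q cc)
        + ∑ b, X (Sum.inr b) * (t₃ q b cc - t₃ b q cc)), ?_, ?_, ?_, ?_⟩
  · -- homogeneity on the inl coordinates
    intro cc p
    simp only [Sum.elim_inl]
    refine IsWeightedHomogeneous.add (hA_h p cc) ?_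
    refine IsWeightedHomogeneous.sum _ _ _ fun b _ => ?_
    have := (isWeightedHomogeneous_X (R := k) w (Sum.inr b)).mul (hs₂h p b cc)
    rwa [hdegR b] at this
  · -- homogeneity on the inr coordinates
    intro cc q
    simp only [Sum.elim_inr]
    have m1 : (∑ a, X (Sum.inl a) * (t₁ a cc q - t₁ cc a q))
        ∈ weightedHomogeneousSubmodule k w (d + 1, e) := by
      refine Submodule.sum_mem _ fun a _ => ?_
      have h' : (t₁ a cc q - t₁ cc a q) ∈ weightedHomogeneousSubmodule k w (d, e) :=
        Submodule.sub_mem _ (ht₁h a cc q) (ht₁h cc a q)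
      have := (isWeightedHomogeneous_X (R := k) w (Sum.inl a)).mul h'
      rwa [hdegL a] at this
    have m2 : (∑ a, X (Sum.inl a) * s₂ a q cc)
        ∈ weightedHomogeneousSubmodule k w (d + 1, e) := by
      refine Submodule.sum_mem _ fun a _ => ?_
      have := (isWeightedHomogeneous_X (R := k) w (Sum.inl a)).mul (hs₂h a q cc)
      rwa [hdegL a] at this
    have m3 : (∑ b, X (Sum.inr b) * (t₃ q b cc - t₃ b q cc))
        ∈ weightedHomogeneousSubmodule k w (d + 1, e) := by
      refine Submodule.sum_mem _ fun b _ => ?_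
      by_cases he : e = 0
      · rw [ht₃0 he, ht₃0 he, sub_self, mul_zero]
        exact Submodule.zero_mem _
      · obtain ⟨e', rfl⟩ : ∃ e', e = e' + 1 := ⟨e - 1, by omega⟩
        have h' : (t₃ q b cc - t₃ b q cc)
            ∈ weightedHomogeneousSubmodule k w (d + 1, e') :=
          Submodule.sub_mem _ (ht₃h q b cc) (ht₃h b q cc)
        have := (isWeightedHomogeneous_X (R := k) w (Sum.inr b)).mul h'
        have hd3 : w (Sum.inr b) + ((d + 1 : ℕ), e') = (d + 1, e' + 1) := by
          show ((0 : ℕ), (1 : ℕ)) + ((d + 1 : ℕ), e') = (d + 1, e' + 1)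
          rw [Prod.mk_add_mk]
          exact Prod.ext (by omega) (by omega)
        rwa [hd3] at this
    exact Submodule.add_mem _ (Submodule.sub_mem _ (Submodule.neg_mem _ m1) m2) m3
  · -- the generators are cycles
    intro cc
    rw [Fintype.sum_sum_type]
    simp only [Sum.elim_inl, Sum.elim_inr]
    have key1 : ∑ p, X (Sum.inl p) * A p cc
        = ∑ q : Fin n₂, X (Sum.inr q) * ∑ a : Fin n₁, X (Sum.inl a) * (t₁ a cc q - t₁ cc a q) := by
      calc ∑ p, X (Sum.inl p) * A p cc
          = ∑ p, ∑ t, X (Sum.inl p) * (X (Sum.inr t) * (t₁ p cc t - t₁ cc p t)) := by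
            refine Finset.sum_congr rfl fun p _ => ?_
            rw [hA_eq p cc, Finset.mul_sum]
        _ = ∑ t : Fin n₂, ∑ p : Fin n₁,
              X (Sum.inl p) * (X (Sum.inr t) * (t₁ p cc t - t₁ cc p t)) := Finset.sum_comm
        _ = _ := by
            refine Finset.sum_congr rfl fun t _ => ?_
            rw [Finset.mul_sum]
            exact Finset.sum_congr rfl fun p _ => by ring
    have key2 : ∑ p : Fin n₁, X (Sum.inl p) * ∑ b : Fin n₂, X (Sum.inr b) * s₂ p b cc
        = ∑ q : Fin n₂, X (Sum.inr q) * ∑ a : Fin n₁, X (Sum.inl a) * s₂ a q cc := by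
      calc ∑ p : Fin n₁, X (Sum.inl p) * ∑ b : Fin n₂, X (Sum.inr b) * s₂ p b cc
          = ∑ p, ∑ b, X (Sum.inl p) * (X (Sum.inr b) * s₂ p b cc) := by
            exact Finset.sum_congr rfl fun p _ => Finset.mul_sum _ _ _
        _ = ∑ b : Fin n₂, ∑ p : Fin n₁,
              X (Sum.inl p) * (X (Sum.inr b) * s₂ p b cc) := Finset.sum_comm
        _ = _ := by
            refine Finset.sum_congr rfl fun b _ => ?_
            rw [Finset.mul_sum]
            exact Finset.sum_congr rfl fun p _ => by ring
    have key3 : ∑ q : Fin n₂, X (Sum.inr q) *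
        ∑ b : Fin n₂, X (Sum.inr b) * (t₃ q b cc - t₃ b q cc) = 0 := by
      have hsw : ∑ q : Fin n₂, ∑ b : Fin n₂, X (Sum.inr q) * (X (Sum.inr b) * t₃ q b cc)
          = ∑ q : Fin n₂, ∑ b : Fin n₂, X (Sum.inr q) * (X (Sum.inr b) * t₃ b q cc) := by
        rw [Finset.sum_comm]
        exact Finset.sum_congr rfl fun b _ => Finset.sum_congr rfl fun q _ => by ring
      calc ∑ q : Fin n₂, X (Sum.inr q) * ∑ b : Fin n₂, X (Sum.inr b) * (t₃ q b cc - t₃ b q cc)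
          = ∑ q : Fin n₂, ∑ b : Fin n₂, (X (Sum.inr q) * (X (Sum.inr b) * t₃ q b cc)
              - X (Sum.inr q) * (X (Sum.inr b) * t₃ b q cc)) := by
            refine Finset.sum_congr rfl fun q _ => ?_
            rw [Finset.mul_sum]
            exact Finset.sum_congr rfl fun b _ => by ring
        _ = (∑ q : Fin n₂, ∑ b : Fin n₂, X (Sum.inr q) * (X (Sum.inr b) * t₃ q b cc))
            - ∑ q : Fin n₂, ∑ b : Fin n₂, X (Sum.inr q) * (X (Sum.inr b) * t₃ b q cc) := by
            rw [← Finset.sum_sub_distrib]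
            exact Finset.sum_congr rfl fun q _ => by rw [Finset.sum_sub_distrib]
        _ = 0 := by rw [hsw, sub_self]
    have expand1 : ∑ p, X (Sum.inl p) * (A p cc + ∑ b, X (Sum.inr b) * s₂ p b cc)
        = (∑ p, X (Sum.inl p) * A p cc)
          + ∑ p : Fin n₁, X (Sum.inl p) * ∑ b : Fin n₂, X (Sum.inr b) * s₂ p b cc := by
      rw [← Finset.sum_add_distrib]
      exact Finset.sum_congr rfl fun p _ => mul_add _ _ _
    have expand2 : ∑ q, X (Sum.inr q) * (- (∑ a, X (Sum.inl a) * (t₁ a cc q - t₁ cc a q))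
          - (∑ a, X (Sum.inl a) * s₂ a q cc)
          + ∑ b, X (Sum.inr b) * (t₃ q b cc - t₃ b q cc))
        = - (∑ q : Fin n₂, X (Sum.inr q) * ∑ a : Fin n₁, X (Sum.inl a) * (t₁ a cc q - t₁ cc a q))
          - (∑ q : Fin n₂, X (Sum.inr q) * ∑ a : Fin n₁, X (Sum.inl a) * s₂ a q cc)
          + ∑ q : Fin n₂, X (Sum.inr q) *
              ∑ b : Fin n₂, X (Sum.inr b) * (t₃ q b cc - t₃ b q cc) := by
      rw [← Finset.sum_neg_distrib, ← Finset.sum_sub_distrib, ← Finset.sum_add_distrib]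
      exact Finset.sum_congr rfl fun q _ => by ring
    rw [expand1, expand2, key1, key2, key3]
    ring
  · -- v is the combination of the generators
    intro i
    match i with
    | Sum.inl p =>
      rw [hvA p]
      have expand : ∑ cc, X (Sum.inl cc) * (Sum.elim
          (fun p => A p cc + ∑ b, X (Sum.inr b) * s₂ p b cc) (fun q => - (∑ a, X (Sum.inl a) * (t₁ a cc q - t₁ cc a q))
        - (∑ a, X (Sum.inl a) * s₂ a q cc)
        + ∑ b, X (Sum.inr b) * (t₃ q b cc - t₃ b q cc)) (Sum.inl p))
          = (∑ cc, X (Sum.inl cc) * A p cc)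
            + ∑ cc : Fin n₁, X (Sum.inl cc) * ∑ b : Fin n₂, X (Sum.inr b) * s₂ p b cc := by
        rw [← Finset.sum_add_distrib]
        exact Finset.sum_congr rfl fun ccc _ => by simp only [Sum.elim_inl]; ring
      rw [expand]
      congr 1
      calc ∑ b, X (Sum.inr b) * B p b
          = ∑ b, ∑ t, X (Sum.inr b) * (X (Sum.inl t) * s₂ p b t) := by
            refine Finset.sum_congr rfl fun b _ => ?_
            rw [hs₂eq p b, Finset.mul_sum]
        _ = ∑ t : Fin n₁, ∑ b : Fin n₂, X (Sum.inr b) * (X (Sum.inl t) * s₂ p b t) :=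
            Finset.sum_comm
        _ = ∑ cc : Fin n₁, X (Sum.inl cc) * ∑ b : Fin n₂, X (Sum.inr b) * s₂ p b cc := by
            refine Finset.sum_congr rfl fun t _ => ?_
            rw [Finset.mul_sum]
            exact Finset.sum_congr rfl fun b _ => by ring
    | Sum.inr q =>
      rw [hvB q]
      have expand : ∑ cc, X (Sum.inl cc) * (Sum.elim
          (fun p => A p cc + ∑ b, X (Sum.inr b) * s₂ p b cc) (fun q => - (∑ a, X (Sum.inl a) * (t₁ a cc q - t₁ cc a q))
        - (∑ a, X (Sum.inl a) * s₂ a q cc)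
        + ∑ b, X (Sum.inr b) * (t₃ q b cc - t₃ b q cc)) (Sum.inr q))
          = - (∑ cc : Fin n₁, X (Sum.inl cc) * ∑ a : Fin n₁, X (Sum.inl a) * (t₁ a cc q - t₁ cc a q))
            - (∑ cc : Fin n₁, X (Sum.inl cc) * ∑ a : Fin n₁, X (Sum.inl a) * s₂ a q cc)
            + ∑ cc : Fin n₁, X (Sum.inl cc) * ∑ b : Fin n₂, X (Sum.inr b) * (t₃ q b cc - t₃ b q cc) := by
        rw [← Finset.sum_neg_distrib, ← Finset.sum_sub_distrib, ← Finset.sum_add_distrib]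
        exact Finset.sum_congr rfl fun ccc _ => by simp only [Sum.elim_inr]; ring
      rw [expand]
      have z1 : ∑ cc : Fin n₁, X (Sum.inl cc) * ∑ a : Fin n₁,
          X (Sum.inl a) * (t₁ a cc q - t₁ cc a q) = 0 := by
        have hsw : ∑ cc : Fin n₁, ∑ a : Fin n₁, X (Sum.inl cc) * (X (Sum.inl a) * t₁ a cc q)
            = ∑ cc : Fin n₁, ∑ a : Fin n₁, X (Sum.inl cc) * (X (Sum.inl a) * t₁ cc a q) := by
          rw [Finset.sum_comm]
          exact Finset.sum_congr rfl fun a _ => Finset.sum_congr rfl fun cc _ => by ring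
        calc ∑ cc : Fin n₁, X (Sum.inl cc) * ∑ a : Fin n₁, X (Sum.inl a) * (t₁ a cc q - t₁ cc a q)
            = ∑ cc : Fin n₁, ∑ a : Fin n₁, (X (Sum.inl cc) * (X (Sum.inl a) * t₁ a cc q)
                - X (Sum.inl cc) * (X (Sum.inl a) * t₁ cc a q)) := by
              refine Finset.sum_congr rfl fun cc _ => ?_
              rw [Finset.mul_sum]
              exact Finset.sum_congr rfl fun a _ => by ring
          _ = (∑ cc : Fin n₁, ∑ a : Fin n₁, X (Sum.inl cc) * (X (Sum.inl a) * t₁ a cc q))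
              - ∑ cc : Fin n₁, ∑ a : Fin n₁, X (Sum.inl cc) * (X (Sum.inl a) * t₁ cc a q) := by
              rw [← Finset.sum_sub_distrib]
              exact Finset.sum_congr rfl fun cc _ => by rw [Finset.sum_sub_distrib]
          _ = 0 := by rw [hsw, sub_self]
      have z2 : ∑ b, X (Sum.inl b) * B' q b
          = - ∑ cc : Fin n₁, X (Sum.inl cc) * ∑ a : Fin n₁, X (Sum.inl a) * s₂ a q cc := by
        calc ∑ b, X (Sum.inl b) * B' q b
            = ∑ b, - ∑ t, X (Sum.inl b) * (X (Sum.inl t) * s₂ b q t) := by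
              refine Finset.sum_congr rfl fun b _ => ?_
              rw [hB'_eq b q, hs₂eq b q, mul_neg, Finset.mul_sum]
          _ = - ∑ b : Fin n₁, ∑ t : Fin n₁, X (Sum.inl b) * (X (Sum.inl t) * s₂ b q t) := by
              rw [← Finset.sum_neg_distrib]
          _ = - ∑ t : Fin n₁, ∑ b : Fin n₁, X (Sum.inl b) * (X (Sum.inl t) * s₂ b q t) := by
              rw [Finset.sum_comm]
          _ = _ := by
              congr 1
              refine Finset.sum_congr rfl fun t _ => ?_
              rw [Finset.mul_sum]
              exact Finset.sum_congr rfl fun b _ => by ring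
      have z3 : ∑ b, X (Sum.inr b) * CC q b
          = ∑ cc : Fin n₁, X (Sum.inl cc) * ∑ b : Fin n₂, X (Sum.inr b) * (t₃ q b cc - t₃ b q cc) := by
        calc ∑ b, X (Sum.inr b) * CC q b
            = ∑ b, ∑ t, X (Sum.inr b) * (X (Sum.inl t) * (t₃ q b t - t₃ b q t)) := by
              refine Finset.sum_congr rfl fun b _ => ?_
              rw [hC_eq q b, Finset.mul_sum]
          _ = ∑ t : Fin n₁, ∑ b : Fin n₂, X (Sum.inr b) * (X (Sum.inl t) * (t₃ q b t - t₃ b q t)) :=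
              Finset.sum_comm
          _ = _ := by
              refine Finset.sum_congr rfl fun t _ => ?_
              rw [Finset.mul_sum]
              exact Finset.sum_congr rfl fun b _ => by ring
      rw [z1, z2, z3]
      ring

private lemma stepE {k : Type} [CommRing k] {n₁ n₂ : ℕ} (h₁ : 0 < n₁) (h₂ : 0 < n₂)
    (d e : ℕ) (v : (Fin n₁ ⊕ Fin n₂) → MvPolynomial (Fin n₁ ⊕ Fin n₂) k)
    (hv1 : ∀ i, (v (Sum.inl i)).IsWeightedHomogeneous (biWeight n₁ n₂) (d, e + 2))
    (hv2 : ∀ j, (v (Sum.inr j)).IsWeightedHomogeneous (biWeight n₁ n₂) (d + 1, e + 1))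
    (hc : (∑ i, X i * v i) = 0) :
    ∃ wv : Fin n₂ → (Fin n₁ ⊕ Fin n₂) → MvPolynomial (Fin n₁ ⊕ Fin n₂) k,
      (∀ c i, (wv c (Sum.inl i)).IsWeightedHomogeneous (biWeight n₁ n₂) (d, e + 1)) ∧
      (∀ c j, (wv c (Sum.inr j)).IsWeightedHomogeneous (biWeight n₁ n₂) (d + 1, e)) ∧
      (∀ c, (∑ i, X i * wv c i) = 0) ∧
      (∀ i, v i = ∑ c, X (Sum.inr c) * wv c i) := by
  classical
  set w := biWeight n₁ n₂ with hwdef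
  obtain ⟨c, hanti, hdiag, hdec⟩ := koszul_syzygy v hc
  set A : Fin n₂ → Fin n₂ → MvPolynomial (Fin n₁ ⊕ Fin n₂) k := fun a b =>
    weightedHomogeneousComponent w (d + 1, e) (c (Sum.inr a) (Sum.inr b)) with hAdef
  set B : Fin n₂ → Fin n₁ → MvPolynomial (Fin n₁ ⊕ Fin n₂) k := fun a b =>
    weightedHomogeneousComponent w (d, e + 1) (c (Sum.inr a) (Sum.inl b)) with hBdef
  set B' : Fin n₁ → Fin n₂ → MvPolynomial (Fin n₁ ⊕ Fin n₂) k := fun a b =>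
    weightedHomogeneousComponent w (d, e + 1) (c (Sum.inl a) (Sum.inr b)) with hB'def
  set CC : Fin n₁ → Fin n₁ → MvPolynomial (Fin n₁ ⊕ Fin n₂) k := fun a b =>
    if d = 0 then 0 else
      weightedHomogeneousComponent w (d - 1, e + 2) (c (Sum.inl a) (Sum.inl b)) with hCdef
  have hA_anti : ∀ a b, A b a = - A a b := by
    intro a b; simp only [hAdef]; rw [hanti, map_neg]
  have hA_diag : ∀ a, A a a = 0 := by
    intro a; simp only [hAdef]; rw [hdiag, map_zero]
  have hB'_eq : ∀ a b, B' b a = - B a b := by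
    intro a b; simp only [hB'def, hBdef]; rw [hanti, map_neg]
  have hC_anti : ∀ a b, CC b a = - CC a b := by
    intro a b; simp only [hCdef]
    by_cases hd : d = 0
    · simp [hd]
    · simp only [if_neg hd]
      rw [hanti, map_neg]
  have hC_diag : ∀ a, CC a a = 0 := by
    intro a; simp only [hCdef]
    by_cases hd : d = 0
    · simp [hd]
    · simp only [if_neg hd]
      rw [hdiag, map_zero]
  have hA_h : ∀ a b, (A a b).IsWeightedHomogeneous w (d + 1, e) := fun a b =>
    weightedHomogeneousComponent_isWeightedHomogeneous _ _
  have hB_h : ∀ a b, (B a b).IsWeightedHomogeneous w (d, e + 1) := fun a b =>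
    weightedHomogeneousComponent_isWeightedHomogeneous _ _
  have hC_h : ∀ a b, (CC a b).IsWeightedHomogeneous w (d - 1, e + 2) := by
    intro a b; simp only [hCdef]
    by_cases hd : d = 0
    · simp only [if_pos hd]; exact isWeightedHomogeneous_zero _ _ _
    · simp only [if_neg hd]
      exact weightedHomogeneousComponent_isWeightedHomogeneous _ _
  -- component extraction identities
  have hXA : ∀ (b : Fin n₂) (q : MvPolynomial (Fin n₁ ⊕ Fin n₂) k),
      weightedHomogeneousComponent w (d + 1, e + 1) (X (Sum.inr b) * q)
      = X (Sum.inr b) * weightedHomogeneousComponent w (d + 1, e) q := fun b q =>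
    whc_X_mul w (Sum.inr b) (d + 1, e) q
  have hXB : ∀ (b : Fin n₁) (q : MvPolynomial (Fin n₁ ⊕ Fin n₂) k),
      weightedHomogeneousComponent w (d + 1, e + 1) (X (Sum.inl b) * q)
      = X (Sum.inl b) * weightedHomogeneousComponent w (d, e + 1) q := fun b q =>
    whc_X_mul w (Sum.inl b) (d, e + 1) q
  have hXB' : ∀ (b : Fin n₂) (q : MvPolynomial (Fin n₁ ⊕ Fin n₂) k),
      weightedHomogeneousComponent w (d, e + 2) (X (Sum.inr b) * q)
      = X (Sum.inr b) * weightedHomogeneousComponent w (d, e + 1) q := fun b q =>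
    whc_X_mul w (Sum.inr b) (d, e + 1) q
  have hXC : ∀ (b : Fin n₁) (a : Fin n₁),
      weightedHomogeneousComponent w (d, e + 2) (X (Sum.inl b) * c (Sum.inl a) (Sum.inl b))
      = X (Sum.inl b) * CC a b := by
    intro b a
    simp only [hCdef]
    rcases d with _ | d'
    · rw [if_pos rfl, mul_zero]
      refine whc_X_mul_eq_zero w (Sum.inl b) _ _ fun m hm => ?_
      have := congrArg Prod.fst hm
      simp only [Prod.fst_add] at this
      have hwb : (w (Sum.inl b)).1 = 1 := rfl
      omega
    · rw [if_neg (Nat.succ_ne_zero d')]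
      exact whc_X_mul w (Sum.inl b) (d', e + 2) _
  -- decomposition of v in terms of components
  have hvA : ∀ q, v (Sum.inr q)
      = ∑ b, X (Sum.inl b) * B q b + ∑ b, X (Sum.inr b) * A q b := by
    intro q
    conv_lhs => rw [← (hv2 q).weightedHomogeneousComponent_same, hdec (Sum.inr q)]
    rw [map_sum, Fintype.sum_sum_type]
    congr 1
    · exact Finset.sum_congr rfl fun b _ => hXB b _
    · exact Finset.sum_congr rfl fun b _ => hXA b _
  have hvB : ∀ p, v (Sum.inl p)
      = ∑ b, X (Sum.inl b) * CC p b + ∑ b, X (Sum.inr b) * B' p b := by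
    intro p
    conv_lhs => rw [← (hv1 p).weightedHomogeneousComponent_same, hdec (Sum.inl p)]
    rw [map_sum, Fintype.sum_sum_type]
    congr 1
    · exact Finset.sum_congr rfl fun b _ => hXC b p
    · exact Finset.sum_congr rfl fun b _ => hXB' b _
  -- factor the components
  have hfac₁ : ∀ a b, ∃ r : Fin n₁ → MvPolynomial (Fin n₁ ⊕ Fin n₂) k,
      (∀ t, (r t).IsWeightedHomogeneous w (d, e)) ∧
      (A a b = ∑ t, X (Sum.inl t) * r t) ∧ (A a b = 0 → ∀ t, r t = 0) :=
    fun a b => exists_factor_left h₁ (hA_h a b)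
  choose s₁ hs₁h hs₁eq hs₁0 using hfac₁
  have hfac₂ : ∀ a b, ∃ r : Fin n₂ → MvPolynomial (Fin n₁ ⊕ Fin n₂) k,
      (∀ t, (r t).IsWeightedHomogeneous w (d, e)) ∧
      (B a b = ∑ t, X (Sum.inr t) * r t) ∧ (B a b = 0 → ∀ t, r t = 0) :=
    fun a b => exists_factor_right h₂ (hB_h a b)
  choose s₂ hs₂h hs₂eq hs₂0 using hfac₂
  have hfac₃ : ∀ a b, ∃ r : Fin n₂ → MvPolynomial (Fin n₁ ⊕ Fin n₂) k,
      (∀ t, (r t).IsWeightedHomogeneous w (d - 1, e + 1)) ∧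
      (CC a b = ∑ t, X (Sum.inr t) * r t) ∧ (CC a b = 0 → ∀ t, r t = 0) :=
    fun a b => exists_factor_right h₂ (hC_h a b)
  choose s₃ hs₃h hs₃eq hs₃0 using hfac₃
  -- triangular versions
  set t₁ : Fin n₂ → Fin n₂ → Fin n₁ → MvPolynomial (Fin n₁ ⊕ Fin n₂) k :=
    fun a b t => if a < b then s₁ a b t else 0 with ht₁def
  set t₃ : Fin n₁ → Fin n₁ → Fin n₂ → MvPolynomial (Fin n₁ ⊕ Fin n₂) k :=
    fun a b t => if a < b then s₃ a b t else 0 with ht₃def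
  have ht₁h : ∀ a b t, (t₁ a b t).IsWeightedHomogeneous w (d, e) := by
    intro a b t; simp only [ht₁def]
    split
    · exact hs₁h a b t
    · exact isWeightedHomogeneous_zero _ _ _
  have ht₃h : ∀ a b t, (t₃ a b t).IsWeightedHomogeneous w (d - 1, e + 1) := by
    intro a b t; simp only [ht₃def]
    split
    · exact hs₃h a b t
    · exact isWeightedHomogeneous_zero _ _ _
  have ht₃0 : d = 0 → ∀ a b t, t₃ a b t = 0 := by
    intro hd a b t; simp only [ht₃def]
    split
    · exact hs₃0 a b (by simp only [hCdef]; rw [if_pos hd]) t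
    · rfl
  have hA_eq : ∀ a b, A a b = ∑ t, X (Sum.inl t) * (t₁ a b t - t₁ b a t) := by
    intro a b
    rcases lt_trichotomy a b with hab | rfl | hab
    · rw [hs₁eq a b]
      refine Finset.sum_congr rfl fun t _ => ?_
      simp only [ht₁def]
      rw [if_pos hab, if_neg (by omega : ¬ b < a), sub_zero]
    · rw [hA_diag]
      symm
      refine Finset.sum_eq_zero fun t _ => ?_
      simp only [ht₁def]
      rw [sub_self, mul_zero]
    · rw [hA_anti b a, hs₁eq b a, ← Finset.sum_neg_distrib]
      refine Finset.sum_congr rfl fun t _ => ?_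
      simp only [ht₁def]
      rw [if_pos hab, if_neg (by omega : ¬ a < b), zero_sub, mul_neg]
  have hC_eq : ∀ a b, CC a b = ∑ t, X (Sum.inr t) * (t₃ a b t - t₃ b a t) := by
    intro a b
    rcases lt_trichotomy a b with hab | rfl | hab
    · rw [hs₃eq a b]
      refine Finset.sum_congr rfl fun t _ => ?_
      simp only [ht₃def]
      rw [if_pos hab, if_neg (by omega : ¬ b < a), sub_zero]
    · rw [hC_diag]
      symm
      refine Finset.sum_eq_zero fun t _ => ?_
      simp only [ht₃def]
      rw [sub_self, mul_zero]
    · rw [hC_anti b a, hs₃eq b a, ← Finset.sum_neg_distrib]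
      refine Finset.sum_congr rfl fun t _ => ?_
      simp only [ht₃def]
      rw [if_pos hab, if_neg (by omega : ¬ a < b), zero_sub, mul_neg]
  -- degree bookkeeping
  have hdegL : ∀ (b : Fin n₁), w (Sum.inl b) + ((d : ℕ), e) = (d + 1, e) := by
    intro b
    show ((1 : ℕ), (0 : ℕ)) + ((d : ℕ), e) = (d + 1, e)
    rw [Prod.mk_add_mk]
    exact Prod.ext (by omega) (by omega)
  have hdegR : ∀ (b : Fin n₂), w (Sum.inr b) + ((d : ℕ), e) = (d, e + 1) := by
    intro b
    show ((0 : ℕ), (1 : ℕ)) + ((d : ℕ), e) = (d, e + 1)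
    rw [Prod.mk_add_mk]
    exact Prod.ext (by omega) (by omega)
  -- the generators
  refine ⟨fun cc => Sum.elim
    (fun q => - (∑ a, X (Sum.inr a) * (t₁ a cc q - t₁ cc a q))
        - (∑ a, X (Sum.inr a) * s₂ a q cc)
        + ∑ b, X (Sum.inl b) * (t₃ q b cc - t₃ b q cc))
    (fun p => A p cc + ∑ b, X (Sum.inl b) * s₂ p b cc), ?_, ?_, ?_, ?_⟩
  · -- homogeneity on the inl coordinates
    intro cc q
    simp only [Sum.elim_inl]
    have m1 : (∑ a, X (Sum.inr a) * (t₁ a cc q - t₁ cc a q))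
        ∈ weightedHomogeneousSubmodule k w (d, e + 1) := by
      refine Submodule.sum_mem _ fun a _ => ?_
      have h' : (t₁ a cc q - t₁ cc a q) ∈ weightedHomogeneousSubmodule k w (d, e) :=
        Submodule.sub_mem _ (ht₁h a cc q) (ht₁h cc a q)
      have := (isWeightedHomogeneous_X (R := k) w (Sum.inr a)).mul h'
      rwa [hdegR a] at this
    have m2 : (∑ a, X (Sum.inr a) * s₂ a q cc)
        ∈ weightedHomogeneousSubmodule k w (d, e + 1) := by
      refine Submodule.sum_mem _ fun a _ => ?_
      have := (isWeightedHomogeneous_X (R := k) w (Sum.inr a)).mul (hs₂h a q cc)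
      rwa [hdegR a] at this
    have m3 : (∑ b, X (Sum.inl b) * (t₃ q b cc - t₃ b q cc))
        ∈ weightedHomogeneousSubmodule k w (d, e + 1) := by
      refine Submodule.sum_mem _ fun b _ => ?_
      by_cases hd : d = 0
      · rw [ht₃0 hd, ht₃0 hd, sub_self, mul_zero]
        exact Submodule.zero_mem _
      · obtain ⟨d', rfl⟩ : ∃ d', d = d' + 1 := ⟨d - 1, by omega⟩
        have h' : (t₃ q b cc - t₃ b q cc)
            ∈ weightedHomogeneousSubmodule k w (d', e + 1) :=
          Submodule.sub_mem _ (ht₃h q b cc) (ht₃h b q cc)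
        have := (isWeightedHomogeneous_X (R := k) w (Sum.inl b)).mul h'
        have hd3 : w (Sum.inl b) + ((d' : ℕ), e + 1) = (d' + 1, e + 1) := by
          show ((1 : ℕ), (0 : ℕ)) + ((d' : ℕ), e + 1) = (d' + 1, e + 1)
          rw [Prod.mk_add_mk]
          exact Prod.ext (by omega) (by omega)
        rwa [hd3] at this
    exact Submodule.add_mem _ (Submodule.sub_mem _ (Submodule.neg_mem _ m1) m2) m3
  · -- homogeneity on the inr coordinates
    intro cc p
    simp only [Sum.elim_inr]
    refine IsWeightedHomogeneous.add (hA_h p cc) ?_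
    refine IsWeightedHomogeneous.sum _ _ _ fun b _ => ?_
    have := (isWeightedHomogeneous_X (R := k) w (Sum.inl b)).mul (hs₂h p b cc)
    rwa [hdegL b] at this
  · -- the generators are cycles
    intro cc
    rw [Fintype.sum_sum_type]
    simp only [Sum.elim_inl, Sum.elim_inr]
    have key1 : ∑ p, X (Sum.inr p) * A p cc
        = ∑ q : Fin n₁, X (Sum.inl q) * ∑ a : Fin n₂, X (Sum.inr a) * (t₁ a cc q - t₁ cc a q) := by
      calc ∑ p, X (Sum.inr p) * A p cc
          = ∑ p, ∑ t, X (Sum.inr p) * (X (Sum.inl t) * (t₁ p cc t - t₁ cc p t)) := by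
            refine Finset.sum_congr rfl fun p _ => ?_
            rw [hA_eq p cc, Finset.mul_sum]
        _ = ∑ t : Fin n₁, ∑ p : Fin n₂,
              X (Sum.inr p) * (X (Sum.inl t) * (t₁ p cc t - t₁ cc p t)) := Finset.sum_comm
        _ = _ := by
            refine Finset.sum_congr rfl fun t _ => ?_
            rw [Finset.mul_sum]
            exact Finset.sum_congr rfl fun p _ => by ring
    have key2 : ∑ p : Fin n₂, X (Sum.inr p) * ∑ b : Fin n₁, X (Sum.inl b) * s₂ p b cc
        = ∑ q : Fin n₁, X (Sum.inl q) * ∑ a : Fin n₂, X (Sum.inr a) * s₂ a q cc := by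
      calc ∑ p : Fin n₂, X (Sum.inr p) * ∑ b : Fin n₁, X (Sum.inl b) * s₂ p b cc
          = ∑ p, ∑ b, X (Sum.inr p) * (X (Sum.inl b) * s₂ p b cc) := by
            exact Finset.sum_congr rfl fun p _ => Finset.mul_sum _ _ _
        _ = ∑ b : Fin n₁, ∑ p : Fin n₂,
              X (Sum.inr p) * (X (Sum.inl b) * s₂ p b cc) := Finset.sum_comm
        _ = _ := by
            refine Finset.sum_congr rfl fun b _ => ?_
            rw [Finset.mul_sum]
            exact Finset.sum_congr rfl fun p _ => by ring
    have key3 : ∑ q : Fin n₁, X (Sum.inl q) *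
        ∑ b : Fin n₁, X (Sum.inl b) * (t₃ q b cc - t₃ b q cc) = 0 := by
      have hsw : ∑ q : Fin n₁, ∑ b : Fin n₁, X (Sum.inl q) * (X (Sum.inl b) * t₃ q b cc)
          = ∑ q : Fin n₁, ∑ b : Fin n₁, X (Sum.inl q) * (X (Sum.inl b) * t₃ b q cc) := by
        rw [Finset.sum_comm]
        exact Finset.sum_congr rfl fun b _ => Finset.sum_congr rfl fun q _ => by ring
      calc ∑ q : Fin n₁, X (Sum.inl q) * ∑ b : Fin n₁, X (Sum.inl b) * (t₃ q b cc - t₃ b q cc)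
          = ∑ q : Fin n₁, ∑ b : Fin n₁, (X (Sum.inl q) * (X (Sum.inl b) * t₃ q b cc)
              - X (Sum.inl q) * (X (Sum.inl b) * t₃ b q cc)) := by
            refine Finset.sum_congr rfl fun q _ => ?_
            rw [Finset.mul_sum]
            exact Finset.sum_congr rfl fun b _ => by ring
        _ = (∑ q : Fin n₁, ∑ b : Fin n₁, X (Sum.inl q) * (X (Sum.inl b) * t₃ q b cc))
            - ∑ q : Fin n₁, ∑ b : Fin n₁, X (Sum.inl q) * (X (Sum.inl b) * t₃ b q cc) := by
            rw [← Finset.sum_sub_distrib]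
            exact Finset.sum_congr rfl fun q _ => by rw [Finset.sum_sub_distrib]
        _ = 0 := by rw [hsw, sub_self]
    have expand1 : ∑ p, X (Sum.inr p) * (A p cc + ∑ b, X (Sum.inl b) * s₂ p b cc)
        = (∑ p, X (Sum.inr p) * A p cc)
          + ∑ p : Fin n₂, X (Sum.inr p) * ∑ b : Fin n₁, X (Sum.inl b) * s₂ p b cc := by
      rw [← Finset.sum_add_distrib]
      exact Finset.sum_congr rfl fun p _ => mul_add _ _ _
    have expand2 : ∑ q, X (Sum.inl q) * (- (∑ a, X (Sum.inr a) * (t₁ a cc q - t₁ cc a q))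
          - (∑ a, X (Sum.inr a) * s₂ a q cc)
          + ∑ b, X (Sum.inl b) * (t₃ q b cc - t₃ b q cc))
        = - (∑ q : Fin n₁, X (Sum.inl q) * ∑ a : Fin n₂, X (Sum.inr a) * (t₁ a cc q - t₁ cc a q))
          - (∑ q : Fin n₁, X (Sum.inl q) * ∑ a : Fin n₂, X (Sum.inr a) * s₂ a q cc)
          + ∑ q : Fin n₁, X (Sum.inl q) *
              ∑ b : Fin n₁, X (Sum.inl b) * (t₃ q b cc - t₃ b q cc) := by
      rw [← Finset.sum_neg_distrib, ← Finset.sum_sub_distrib, ← Finset.sum_add_distrib]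
      exact Finset.sum_congr rfl fun q _ => by ring
    rw [expand1, expand2, key1, key2, key3]
    ring
  · -- v is the combination of the generators
    intro i
    match i with
    | Sum.inr p =>
      rw [hvA p]
      have expand : ∑ cc, X (Sum.inr cc) * (Sum.elim
          (fun q => - (∑ a, X (Sum.inr a) * (t₁ a cc q - t₁ cc a q))
        - (∑ a, X (Sum.inr a) * s₂ a q cc)
        + ∑ b, X (Sum.inl b) * (t₃ q b cc - t₃ b q cc))
          (fun p => A p cc + ∑ b, X (Sum.inl b) * s₂ p b cc) (Sum.inr p))
          = (∑ cc, X (Sum.inr cc) * A p cc)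
            + ∑ cc : Fin n₂, X (Sum.inr cc) * ∑ b : Fin n₁, X (Sum.inl b) * s₂ p b cc := by
        rw [← Finset.sum_add_distrib]
        exact Finset.sum_congr rfl fun ccc _ => by simp only [Sum.elim_inr]; ring
      rw [expand]
      rw [add_comm (∑ b, X (Sum.inl b) * B p b) (∑ b, X (Sum.inr b) * A p b)]
      congr 1
      calc ∑ b, X (Sum.inl b) * B p b
          = ∑ b, ∑ t, X (Sum.inl b) * (X (Sum.inr t) * s₂ p b t) := by
            refine Finset.sum_congr rfl fun b _ => ?_
            rw [hs₂eq p b, Finset.mul_sum]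
        _ = ∑ t : Fin n₂, ∑ b : Fin n₁, X (Sum.inl b) * (X (Sum.inr t) * s₂ p b t) :=
            Finset.sum_comm
        _ = ∑ cc : Fin n₂, X (Sum.inr cc) * ∑ b : Fin n₁, X (Sum.inl b) * s₂ p b cc := by
            refine Finset.sum_congr rfl fun t _ => ?_
            rw [Finset.mul_sum]
            exact Finset.sum_congr rfl fun b _ => by ring
    | Sum.inl q =>
      rw [hvB q]
      have expand : ∑ cc, X (Sum.inr cc) * (Sum.elim
          (fun q => - (∑ a, X (Sum.inr a) * (t₁ a cc q - t₁ cc a q))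
        - (∑ a, X (Sum.inr a) * s₂ a q cc)
        + ∑ b, X (Sum.inl b) * (t₃ q b cc - t₃ b q cc))
          (fun p => A p cc + ∑ b, X (Sum.inl b) * s₂ p b cc) (Sum.inl q))
          = - (∑ cc : Fin n₂, X (Sum.inr cc) * ∑ a : Fin n₂, X (Sum.inr a) * (t₁ a cc q - t₁ cc a q))
            - (∑ cc : Fin n₂, X (Sum.inr cc) * ∑ a : Fin n₂, X (Sum.inr a) * s₂ a q cc)
            + ∑ cc : Fin n₂, X (Sum.inr cc) * ∑ b : Fin n₁, X (Sum.inl b) * (t₃ q b cc - t₃ b q cc) := by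
        rw [← Finset.sum_neg_distrib, ← Finset.sum_sub_distrib, ← Finset.sum_add_distrib]
        exact Finset.sum_congr rfl fun ccc _ => by simp only [Sum.elim_inl]; ring
      rw [expand]
      have z1 : ∑ cc : Fin n₂, X (Sum.inr cc) * ∑ a : Fin n₂,
          X (Sum.inr a) * (t₁ a cc q - t₁ cc a q) = 0 := by
        have hsw : ∑ cc : Fin n₂, ∑ a : Fin n₂, X (Sum.inr cc) * (X (Sum.inr a) * t₁ a cc q)
            = ∑ cc : Fin n₂, ∑ a : Fin n₂, X (Sum.inr cc) * (X (Sum.inr a) * t₁ cc a q) := by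
          rw [Finset.sum_comm]
          exact Finset.sum_congr rfl fun a _ => Finset.sum_congr rfl fun cc _ => by ring
        calc ∑ cc : Fin n₂, X (Sum.inr cc) * ∑ a : Fin n₂, X (Sum.inr a) * (t₁ a cc q - t₁ cc a q)
            = ∑ cc : Fin n₂, ∑ a : Fin n₂, (X (Sum.inr cc) * (X (Sum.inr a) * t₁ a cc q)
                - X (Sum.inr cc) * (X (Sum.inr a) * t₁ cc a q)) := by
              refine Finset.sum_congr rfl fun cc _ => ?_
              rw [Finset.mul_sum]
              exact Finset.sum_congr rfl fun a _ => by ring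
          _ = (∑ cc : Fin n₂, ∑ a : Fin n₂, X (Sum.inr cc) * (X (Sum.inr a) * t₁ a cc q))
              - ∑ cc : Fin n₂, ∑ a : Fin n₂, X (Sum.inr cc) * (X (Sum.inr a) * t₁ cc a q) := by
              rw [← Finset.sum_sub_distrib]
              exact Finset.sum_congr rfl fun cc _ => by rw [Finset.sum_sub_distrib]
          _ = 0 := by rw [hsw, sub_self]
      have z2 : ∑ b, X (Sum.inr b) * B' q b
          = - ∑ cc : Fin n₂, X (Sum.inr cc) * ∑ a : Fin n₂, X (Sum.inr a) * s₂ a q cc := by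
        calc ∑ b, X (Sum.inr b) * B' q b
            = ∑ b, - ∑ t, X (Sum.inr b) * (X (Sum.inr t) * s₂ b q t) := by
              refine Finset.sum_congr rfl fun b _ => ?_
              rw [hB'_eq b q, hs₂eq b q, mul_neg, Finset.mul_sum]
          _ = - ∑ b : Fin n₂, ∑ t : Fin n₂, X (Sum.inr b) * (X (Sum.inr t) * s₂ b q t) := by
              rw [← Finset.sum_neg_distrib]
          _ = - ∑ t : Fin n₂, ∑ b : Fin n₂, X (Sum.inr b) * (X (Sum.inr t) * s₂ b q t) := by
              rw [Finset.sum_comm]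
          _ = _ := by
              congr 1
              refine Finset.sum_congr rfl fun t _ => ?_
              rw [Finset.mul_sum]
              exact Finset.sum_congr rfl fun b _ => by ring
      have z3 : ∑ b, X (Sum.inl b) * CC q b
          = ∑ cc : Fin n₂, X (Sum.inr cc) * ∑ b : Fin n₁, X (Sum.inl b) * (t₃ q b cc - t₃ b q cc) := by
        calc ∑ b, X (Sum.inl b) * CC q b
            = ∑ b, ∑ t, X (Sum.inl b) * (X (Sum.inr t) * (t₃ q b t - t₃ b q t)) := by
              refine Finset.sum_congr rfl fun b _ => ?_
              rw [hC_eq q b, Finset.mul_sum]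
          _ = ∑ t : Fin n₂, ∑ b : Fin n₁, X (Sum.inl b) * (X (Sum.inr t) * (t₃ q b t - t₃ b q t)) :=
              Finset.sum_comm
          _ = _ := by
              refine Finset.sum_congr rfl fun t _ => ?_
              rw [Finset.mul_sum]
              exact Finset.sum_congr rfl fun b _ => by ring
      rw [z1, z2, z3]
      ring

private lemma degX1 {n₁ n₂ : ℕ} (cc : Fin n₁) (d e : ℕ) :
    biWeight n₁ n₂ (Sum.inl cc) + ((d : ℕ), e) = (d + 1, e) := by
  show ((1 : ℕ), (0 : ℕ)) + ((d : ℕ), e) = (d + 1, e)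
  rw [Prod.mk_add_mk]
  exact Prod.ext (by omega) (by omega)

private lemma degX2 {n₁ n₂ : ℕ} (cc : Fin n₂) (d e : ℕ) :
    biWeight n₁ n₂ (Sum.inr cc) + ((d : ℕ), e) = (d, e + 1) := by
  show ((0 : ℕ), (1 : ℕ)) + ((d : ℕ), e) = (d, e + 1)
  rw [Prod.mk_add_mk]
  exact Prod.ext (by omega) (by omega)

private lemma KV_step_left {k : Type} [Field k] {n₁ n₂ : ℕ} (h₁ : 0 < n₁) (h₂ : 0 < n₂)
    {K : Submodule k (MvPolynomial (Fin n₁ ⊕ Fin n₂) k)} {d e : ℕ}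
    (hKV : KoszulVanish k n₁ n₂ K d e) : KoszulVanish k n₁ n₂ K (d + 1) e := by
  intro v hv1 hv2 hcyc
  obtain ⟨wv, hw1, hw2, hwcyc, hwdec⟩ := stepD h₁ h₂ d e v hv1 hv2 hcyc
  have hKV' := fun cc => hKV (wv cc) (hw1 cc) (hw2 cc) (hwcyc cc)
  choose m κ s hκ hs hls hrs using hKV'
  set α := (cc : Fin n₁) × Fin (m cc) with hα
  set eqv := (Fintype.equivFin α).symm with heqv
  refine ⟨Fintype.card α, fun t => κ (eqv t).1 (eqv t).2, fun t =>
    X (Sum.inl (eqv t).1) * s (eqv t).1 (eqv t).2, fun t => hκ _ _, fun t => ?_, ?_, ?_⟩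
  · have := (isWeightedHomogeneous_X (R := k) (biWeight n₁ n₂) (Sum.inl (eqv t).1)).mul
      (hs (eqv t).1 (eqv t).2)
    rwa [degX1] at this
  · intro i
    rw [hwdec (Sum.inl i)]
    show _ = ∑ t : Fin (Fintype.card α),
      pderiv (Sum.inl i) (κ (eqv t).1 (eqv t).2) * (X (Sum.inl (eqv t).1) * s (eqv t).1 (eqv t).2)
    rw [Fintype.sum_equiv eqv
      (fun t => pderiv (Sum.inl i) (κ (eqv t).1 (eqv t).2)
        * (X (Sum.inl (eqv t).1) * s (eqv t).1 (eqv t).2))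
      (fun a : α => pderiv (Sum.inl i) (κ a.1 a.2) * (X (Sum.inl a.1) * s a.1 a.2))
      (fun t => rfl)]
    rw [← Finset.univ_sigma_univ, Finset.sum_sigma]
    refine Finset.sum_congr rfl fun cc _ => ?_
    rw [hls cc i, Finset.mul_sum]
    exact Finset.sum_congr rfl fun t _ => by ring
  · intro j
    rw [hwdec (Sum.inr j)]
    show _ = -∑ t : Fin (Fintype.card α),
      pderiv (Sum.inr j) (κ (eqv t).1 (eqv t).2) * (X (Sum.inl (eqv t).1) * s (eqv t).1 (eqv t).2)
    rw [Fintype.sum_equiv eqv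
      (fun t => pderiv (Sum.inr j) (κ (eqv t).1 (eqv t).2)
        * (X (Sum.inl (eqv t).1) * s (eqv t).1 (eqv t).2))
      (fun a : α => pderiv (Sum.inr j) (κ a.1 a.2) * (X (Sum.inl a.1) * s a.1 a.2))
      (fun t => rfl)]
    rw [← Finset.univ_sigma_univ, Finset.sum_sigma, ← Finset.sum_neg_distrib]
    refine Finset.sum_congr rfl fun cc _ => ?_
    rw [hrs cc j, mul_neg, Finset.mul_sum]
    exact congrArg Neg.neg (Finset.sum_congr rfl fun t _ => by ring)

private lemma KV_step_right {k : Type} [Field k] {n₁ n₂ : ℕ} (h₁ : 0 < n₁) (h₂ : 0 < n₂)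
    {K : Submodule k (MvPolynomial (Fin n₁ ⊕ Fin n₂) k)} {d e : ℕ}
    (hKV : KoszulVanish k n₁ n₂ K d e) : KoszulVanish k n₁ n₂ K d (e + 1) := by
  intro v hv1 hv2 hcyc
  obtain ⟨wv, hw1, hw2, hwcyc, hwdec⟩ := stepE h₁ h₂ d e v hv1 hv2 hcyc
  have hKV' := fun cc => hKV (wv cc) (hw1 cc) (hw2 cc) (hwcyc cc)
  choose m κ s hκ hs hls hrs using hKV'
  set α := (cc : Fin n₂) × Fin (m cc) with hα
  set eqv := (Fintype.equivFin α).symm with heqv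
  refine ⟨Fintype.card α, fun t => κ (eqv t).1 (eqv t).2, fun t =>
    X (Sum.inr (eqv t).1) * s (eqv t).1 (eqv t).2, fun t => hκ _ _, fun t => ?_, ?_, ?_⟩
  · have := (isWeightedHomogeneous_X (R := k) (biWeight n₁ n₂) (Sum.inr (eqv t).1)).mul
      (hs (eqv t).1 (eqv t).2)
    rwa [degX2] at this
  · intro i
    rw [hwdec (Sum.inl i)]
    show _ = ∑ t : Fin (Fintype.card α),
      pderiv (Sum.inl i) (κ (eqv t).1 (eqv t).2) * (X (Sum.inr (eqv t).1) * s (eqv t).1 (eqv t).2)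
    rw [Fintype.sum_equiv eqv
      (fun t => pderiv (Sum.inl i) (κ (eqv t).1 (eqv t).2)
        * (X (Sum.inr (eqv t).1) * s (eqv t).1 (eqv t).2))
      (fun a : α => pderiv (Sum.inl i) (κ a.1 a.2) * (X (Sum.inr a.1) * s a.1 a.2))
      (fun t => rfl)]
    rw [← Finset.univ_sigma_univ, Finset.sum_sigma]
    refine Finset.sum_congr rfl fun cc _ => ?_
    rw [hls cc i, Finset.mul_sum]
    exact Finset.sum_congr rfl fun t _ => by ring
  · intro j
    rw [hwdec (Sum.inr j)]
    show _ = -∑ t : Fin (Fintype.card α),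
      pderiv (Sum.inr j) (κ (eqv t).1 (eqv t).2) * (X (Sum.inr (eqv t).1) * s (eqv t).1 (eqv t).2)
    rw [Fintype.sum_equiv eqv
      (fun t => pderiv (Sum.inr j) (κ (eqv t).1 (eqv t).2)
        * (X (Sum.inr (eqv t).1) * s (eqv t).1 (eqv t).2))
      (fun a : α => pderiv (Sum.inr j) (κ a.1 a.2) * (X (Sum.inr a.1) * s a.1 a.2))
      (fun t => rfl)]
    rw [← Finset.univ_sigma_univ, Finset.sum_sigma, ← Finset.sum_neg_distrib]
    refine Finset.sum_congr rfl fun cc _ => ?_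
    rw [hrs cc j, mul_neg, Finset.mul_sum]
    exact congrArg Neg.neg (Finset.sum_congr rfl fun t _ => by ring)

/-!
STATEMENT 16: the bigraded Koszul module `W(V,K)` (middle homology of
`K ⊗ S → V ⊗ S → S`) is generated in bidegree `(0,0)`; consequently, if
`W_{d₀,e₀}(V,K) = 0` for some `(d₀,e₀)`, then `W_{d,e}(V,K) = 0` for all `d ≥ d₀`, `e ≥ e₀`.
-/
theorem stmt16 (k : Type) [Field k] (n₁ n₂ : ℕ) (h₁ : 2 ≤ n₁) (h₂ : 2 ≤ n₂)
    (K : Submodule k (MvPolynomial (Fin n₁ ⊕ Fin n₂) k))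
    (hK : K ≤ weightedHomogeneousSubmodule k (biWeight n₁ n₂) (1, 1))
    (d₀ e₀ : ℕ) (h0 : KoszulVanish k n₁ n₂ K d₀ e₀) :
    ∀ d e : ℕ, d₀ ≤ d → e₀ ≤ e → KoszulVanish k n₁ n₂ K d e := by
  have hp₁ : 0 < n₁ := by omega
  have hp₂ : 0 < n₂ := by omega
  have key : ∀ a b : ℕ, KoszulVanish k n₁ n₂ K (d₀ + a) (e₀ + b) := by
    intro a
    induction a with
    | zero =>
      intro b
      induction b with
      | zero => exact h0
      | succ b ihb => exact KV_step_right hp₁ hp₂ ihb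
    | succ a iha =>
      intro b
      exact KV_step_left hp₁ hp₂ (iha b)
  intro d e hd he
  have : KoszulVanish k n₁ n₂ K (d₀ + (d - d₀)) (e₀ + (e - e₀)) := key _ _
  rwa [Nat.add_sub_cancel' hd, Nat.add_sub_cancel' he] at this
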